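/- Let R be a K-graded ring and q: Spec_K(R) → Spec(R_0) the map sending a K-prime ideal p to p ∩ R_0. Then q is surjective and closed (with respect to the topologies whose closed sets are V(a) for graded resp. ordinary ideals a), and for any family of closed sets A_i ⊆ Spec_K(R) one has q(∩_i A_i) = ∩_i q(A_i). -/

import Mathlib

section

variable {K R : Type*} [AddCommGroup K] [DecidableEq K] [CommRing R]
  (𝒜 : K → AddSubgroup R) [GradedRing 𝒜]

/-- A `K`-prime ideal: a proper (homogeneous) ideal such that a product of homogeneous
elements lies in it only if one of the factors does. -/
def IsKPrime (p : Ideal R) : Prop :=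
  Ideal.IsHomogeneous 𝒜 p ∧ p ≠ ⊤ ∧
    ∀ a b : R, SetLike.IsHomogeneousElem 𝒜 a → SetLike.IsHomogeneousElem 𝒜 b →
      a * b ∈ p → a ∈ p ∨ b ∈ p

/-- Contraction of an ideal of `R` to the degree zero subring `R₀`. -/
def contractToZero (a : Ideal R) : Ideal ↥(SetLike.GradeZero.subring 𝒜) :=
  Ideal.comap (SetLike.GradeZero.subring 𝒜).subtype a

namespace Stmt16Aux

/-- The image of `q ⊆ R₀` in `R`, as an additive subgroup. -/
def qlift (q : Ideal ↥(SetLike.GradeZero.subring 𝒜)) : AddSubgroup R :=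
  AddSubgroup.map (SetLike.GradeZero.subring 𝒜).subtype.toAddMonoidHom
    q.toAddSubgroup

lemma mem_qlift {q : Ideal ↥(SetLike.GradeZero.subring 𝒜)} {z : R} :
    z ∈ qlift 𝒜 q ↔ ∃ w ∈ q, (w : R) = z := by
  simp [qlift, AddSubgroup.mem_map]

lemma coe_mem_qlift {q : Ideal ↥(SetLike.GradeZero.subring 𝒜)}
    {w : ↥(SetLike.GradeZero.subring 𝒜)} : (w : R) ∈ qlift 𝒜 q ↔ w ∈ q := by
  rw [mem_qlift]
  constructor
  · rintro ⟨w', hw', h⟩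
    rwa [Subtype.coe_injective h] at hw'
  · exact fun h => ⟨w, h, rfl⟩

lemma mul_mem_qlift {q : Ideal ↥(SetLike.GradeZero.subring 𝒜)} {c z : R}
    (hc : c ∈ 𝒜 0) (hz : z ∈ qlift 𝒜 q) : c * z ∈ qlift 𝒜 q := by
  rw [mem_qlift] at hz ⊢
  obtain ⟨w, hw, rfl⟩ := hz
  exact ⟨(⟨c, hc⟩ : ↥(SetLike.GradeZero.subring 𝒜)) * w,
    q.mul_mem_left _ hw, rfl⟩

/-- The biggest homogeneous ideal contracting into `q`:
`x ∈ P q` iff every homogeneous component `x_k` kills `𝒜 (-k)` into `q`. -/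
def P (q : Ideal ↥(SetLike.GradeZero.subring 𝒜)) : Ideal R where
  carrier := {x | ∀ k : K, ∀ y ∈ 𝒜 (-k),
    (DirectSum.decompose 𝒜 x k : R) * y ∈ qlift 𝒜 q}
  zero_mem' := by
    intro k y hy
    simp only [DirectSum.decompose_zero, DirectSum.zero_apply, ZeroMemClass.coe_zero, zero_mul]
    exact zero_mem _
  add_mem' := by
    intro a b ha hb k y hy
    rw [DirectSum.decompose_add, DirectSum.add_apply, AddSubgroup.coe_add, add_mul]
    exact add_mem (ha k y hy) (hb k y hy)
  smul_mem' := by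
    intro c x hx k y hy
    rw [smul_eq_mul, DirectSum.decompose_mul]
    classical
    rw [DirectSum.coe_mul_apply, Finset.sum_mul]
    refine sum_mem fun ij hij => ?_
    obtain ⟨hmem, hsum⟩ := Finset.mem_filter.mp hij
    have h1 : (DirectSum.decompose 𝒜 c ij.1 : R) * y ∈ 𝒜 (-ij.2) := by
      have := SetLike.mul_mem_graded (DirectSum.decompose 𝒜 c ij.1).2 hy
      have hk : ij.1 + -k = -ij.2 := by rw [← hsum, neg_add, add_neg_cancel_left]
      rwa [hk] at this
    have := hx ij.2 _ h1
    have heq : (DirectSum.decompose 𝒜 c ij.1 : R) * (DirectSum.decompose 𝒜 x ij.2 : R) * y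
        = (DirectSum.decompose 𝒜 x ij.2 : R) * ((DirectSum.decompose 𝒜 c ij.1 : R) * y) := by
      ring
    rw [heq]
    exact this

lemma P_isHomogeneous (q : Ideal ↥(SetLike.GradeZero.subring 𝒜)) :
    Ideal.IsHomogeneous 𝒜 (P 𝒜 q) := by
  intro i x hx k y hy
  rcases eq_or_ne k i with rfl | hne
  · rw [DirectSum.decompose_of_mem_same 𝒜 (DirectSum.decompose 𝒜 x k).2]
    exact hx k y hy
  · rw [DirectSum.decompose_of_mem_ne 𝒜 (DirectSum.decompose 𝒜 x i).2 (Ne.symm hne), zero_mul]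
    exact zero_mem _

lemma mem_P_of_mem {q : Ideal ↥(SetLike.GradeZero.subring 𝒜)} {x : R} {k : K}
    (hx : x ∈ 𝒜 k) (h : ∀ y ∈ 𝒜 (-k), x * y ∈ qlift 𝒜 q) : x ∈ P 𝒜 q := by
  intro j y hy
  rcases eq_or_ne j k with rfl | hne
  · rw [DirectSum.decompose_of_mem_same 𝒜 hx]
    exact h y hy
  · rw [DirectSum.decompose_of_mem_ne 𝒜 hx (Ne.symm hne), zero_mul]
    exact zero_mem _

lemma P_mem_iff {q : Ideal ↥(SetLike.GradeZero.subring 𝒜)} {x : R} {k : K}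
    (hx : x ∈ 𝒜 k) : x ∈ P 𝒜 q ↔ ∀ y ∈ 𝒜 (-k), x * y ∈ qlift 𝒜 q := by
  constructor
  · intro h y hy
    have := h k y hy
    rwa [DirectSum.decompose_of_mem_same 𝒜 hx] at this
  · exact mem_P_of_mem 𝒜 hx

lemma P_ne_top {q : Ideal ↥(SetLike.GradeZero.subring 𝒜)} (hq : q ≠ ⊤) :
    P 𝒜 q ≠ ⊤ := by
  intro h
  have h1 : (1 : R) ∈ P 𝒜 q := h ▸ Submodule.mem_top
  have h2 := (P_mem_iff 𝒜 (SetLike.one_mem_graded 𝒜)).mp h1 1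
    (by rw [neg_zero]; exact SetLike.one_mem_graded 𝒜)
  rw [mul_one] at h2
  have : (1 : ↥(SetLike.GradeZero.subring 𝒜)) ∈ q := by
    rwa [← coe_mem_qlift 𝒜 (w := 1)]
  exact hq (Ideal.eq_top_of_isUnit_mem q this isUnit_one)

lemma P_prime {q : Ideal ↥(SetLike.GradeZero.subring 𝒜)} (hq : q.IsPrime) :
    ∀ a b : R, SetLike.IsHomogeneousElem 𝒜 a → SetLike.IsHomogeneousElem 𝒜 b →
      a * b ∈ P 𝒜 q → a ∈ P 𝒜 q ∨ b ∈ P 𝒜 q := by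
  rintro a b ⟨k, hk⟩ ⟨m, hm⟩ hab
  by_contra hcon
  push_neg at hcon
  obtain ⟨ha, hb⟩ := hcon
  rw [P_mem_iff 𝒜 hk] at ha
  rw [P_mem_iff 𝒜 hm] at hb
  push_neg at ha hb
  obtain ⟨u, hu, hau⟩ := ha
  obtain ⟨v, hv, hbv⟩ := hb
  have habm : a * b ∈ 𝒜 (k + m) := SetLike.mul_mem_graded hk hm
  have huv : u * v ∈ 𝒜 (-(k + m)) := by
    have := SetLike.mul_mem_graded hu hv
    rwa [← neg_add] at this
  have hmem : a * b * (u * v) ∈ qlift 𝒜 q :=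
    (P_mem_iff 𝒜 habm).mp hab _ huv
  have hau0 : a * u ∈ 𝒜 (0 : K) := by
    have := SetLike.mul_mem_graded hk hu
    rwa [add_neg_cancel] at this
  have hbv0 : b * v ∈ 𝒜 (0 : K) := by
    have := SetLike.mul_mem_graded hm hv
    rwa [add_neg_cancel] at this
  set w1 : ↥(SetLike.GradeZero.subring 𝒜) := ⟨a * u, hau0⟩
  set w2 : ↥(SetLike.GradeZero.subring 𝒜) := ⟨b * v, hbv0⟩
  have hcoe : ((w1 * w2 : ↥(SetLike.GradeZero.subring 𝒜)) : R) = a * b * (u * v) := by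
    show (a * u) * (b * v) = a * b * (u * v)
    ring
  have hw12 : w1 * w2 ∈ q := by
    rw [← coe_mem_qlift 𝒜, hcoe]
    exact hmem
  rcases hq.mem_or_mem hw12 with h | h
  · exact hau ((coe_mem_qlift 𝒜).mpr h)
  · exact hbv ((coe_mem_qlift 𝒜).mpr h)

lemma isKPrime_P {q : Ideal ↥(SetLike.GradeZero.subring 𝒜)} (hq : q.IsPrime) :
    IsKPrime 𝒜 (P 𝒜 q) :=
  ⟨P_isHomogeneous 𝒜 q, P_ne_top 𝒜 hq.ne_top, P_prime 𝒜 hq⟩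

lemma contract_P {q : Ideal ↥(SetLike.GradeZero.subring 𝒜)} :
    contractToZero 𝒜 (P 𝒜 q) = q := by
  ext w
  have hw0 : (w : R) ∈ 𝒜 (0 : K) := w.2
  show (w : R) ∈ P 𝒜 q ↔ w ∈ q
  rw [P_mem_iff 𝒜 hw0]
  constructor
  · intro h
    have := h 1 (by rw [neg_zero]; exact SetLike.one_mem_graded 𝒜)
    rw [mul_one] at this
    exact (coe_mem_qlift 𝒜).mp this
  · intro h y hy
    rw [neg_zero] at hy
    rw [mul_comm]
    exact mul_mem_qlift 𝒜 hy ((coe_mem_qlift 𝒜).mpr h)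

/-- Maximality of `P q`. -/
lemma le_P {q : Ideal ↥(SetLike.GradeZero.subring 𝒜)} {p : Ideal R}
    (hp : Ideal.IsHomogeneous 𝒜 p) (hle : contractToZero 𝒜 p ≤ q) : p ≤ P 𝒜 q := by
  intro x hx k y hy
  have hxk : (DirectSum.decompose 𝒜 x k : R) ∈ p := hp k hx
  have hmul : (DirectSum.decompose 𝒜 x k : R) * y ∈ p := p.mul_mem_right _ hxk
  have hmul0 : (DirectSum.decompose 𝒜 x k : R) * y ∈ 𝒜 (0 : K) := by
    have := SetLike.mul_mem_graded (DirectSum.decompose 𝒜 x k).2 hy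
    rwa [add_neg_cancel] at this
  have : (⟨_, hmul0⟩ : ↥(SetLike.GradeZero.subring 𝒜)) ∈ contractToZero 𝒜 p := hmul
  exact (coe_mem_qlift 𝒜 (w := ⟨_, hmul0⟩)).mpr (hle this)

lemma contract_isPrime {p : Ideal R} (hp : IsKPrime 𝒜 p) :
    (contractToZero 𝒜 p).IsPrime := by
  obtain ⟨hhom, hne, hmul⟩ := hp
  constructor
  · intro h
    apply hne
    have : (1 : ↥(SetLike.GradeZero.subring 𝒜)) ∈ contractToZero 𝒜 p :=
      h ▸ Submodule.mem_top
    exact Ideal.eq_top_of_isUnit_mem p this isUnit_one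
  · intro w1 w2 h
    have hcoe : ((w1 : R)) * (w2 : R) ∈ p := h
    rcases hmul _ _ ⟨0, w1.2⟩ ⟨0, w2.2⟩ hcoe with h' | h'
    · exact Or.inl h'
    · exact Or.inr h'

end Stmt16Aux

open Stmt16Aux in
/-- The map `q : Spec_K(R) → Spec(R₀)`, `p ↦ p ∩ R₀`, is well defined (contractions
of `K`-primes are prime), surjective, closed (the image of a closed set `V(a)` for a graded ideal
`a` is a closed set of `Spec R₀`), and respects arbitrary intersections of closed sets. -/
theorem stmt_16 {ι : Type*} (A : ι → Ideal R) (hA : ∀ i, Ideal.IsHomogeneous 𝒜 (A i)) :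
    -- well-definedness
    (∀ p : Ideal R, IsKPrime 𝒜 p → (contractToZero 𝒜 p).IsPrime) ∧
    -- surjectivity
    (∀ q : Ideal ↥(SetLike.GradeZero.subring 𝒜), q.IsPrime →
      ∃ p : Ideal R, IsKPrime 𝒜 p ∧ contractToZero 𝒜 p = q) ∧
    -- closedness: q(V(a)) = V(b) inside Spec R₀
    (∀ a : Ideal R, Ideal.IsHomogeneous 𝒜 a →
      ∃ b : Ideal ↥(SetLike.GradeZero.subring 𝒜),
        ∀ q : Ideal ↥(SetLike.GradeZero.subring 𝒜), q.IsPrime →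
          ((∃ p : Ideal R, IsKPrime 𝒜 p ∧ a ≤ p ∧ contractToZero 𝒜 p = q) ↔ b ≤ q)) ∧
    -- q(⋂ᵢ V(Aᵢ)) = ⋂ᵢ q(V(Aᵢ))
    (∀ q : Ideal ↥(SetLike.GradeZero.subring 𝒜), q.IsPrime →
      ((∃ p : Ideal R, IsKPrime 𝒜 p ∧ (∀ i, A i ≤ p) ∧ contractToZero 𝒜 p = q) ↔
        ∀ i, ∃ p : Ideal R, IsKPrime 𝒜 p ∧ A i ≤ p ∧ contractToZero 𝒜 p = q)) := by
  refine ⟨fun p hp => contract_isPrime 𝒜 hp, fun q hq => ⟨P 𝒜 q, isKPrime_P 𝒜 hq, contract_P 𝒜⟩,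
    ?_, ?_⟩
  · intro a ha
    refine ⟨Ideal.span {z : ↥(SetLike.GradeZero.subring 𝒜) |
      ∃ k : K, ∃ x ∈ a, x ∈ 𝒜 k ∧ ∃ y ∈ 𝒜 (-k), (z : R) = x * y}, fun q hq => ?_⟩
    constructor
    · rintro ⟨p, hp, hap, rfl⟩
      rw [Ideal.span_le]
      rintro z ⟨k, x, hxa, hxk, y, hy, hz⟩
      show (z : R) ∈ p
      rw [hz]
      exact p.mul_mem_right _ (hap hxa)
    · intro hb
      refine ⟨P 𝒜 q, isKPrime_P 𝒜 hq, ?_, contract_P 𝒜⟩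
      intro x hx k y hy
      have hxk : (DirectSum.decompose 𝒜 x k : R) ∈ a := ha k hx
      have hmul0 : (DirectSum.decompose 𝒜 x k : R) * y ∈ 𝒜 (0 : K) := by
        have := SetLike.mul_mem_graded (DirectSum.decompose 𝒜 x k).2 hy
        rwa [add_neg_cancel] at this
      have hz : (⟨_, hmul0⟩ : ↥(SetLike.GradeZero.subring 𝒜)) ∈
          Ideal.span {z : ↥(SetLike.GradeZero.subring 𝒜) |
            ∃ k : K, ∃ x ∈ a, x ∈ 𝒜 k ∧ ∃ y ∈ 𝒜 (-k), (z : R) = x * y} :=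
        Ideal.subset_span ⟨k, _, hxk, (DirectSum.decompose 𝒜 x k).2, y, hy, rfl⟩
      exact (coe_mem_qlift 𝒜 (w := ⟨_, hmul0⟩)).mpr (hb hz)
  · intro q hq
    constructor
    · rintro ⟨p, hp, hAp, rfl⟩ i
      exact ⟨p, hp, hAp i, rfl⟩
    · intro h
      refine ⟨P 𝒜 q, isKPrime_P 𝒜 hq, fun i => ?_, contract_P 𝒜⟩
      obtain ⟨p, hp, hAi, hqc⟩ := h i
      exact le_trans hAi (le_P 𝒜 hp.1 (le_of_eq hqc))

end
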